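/- Let V be a set and let E be a finite set of cuts of V (nonempty proper subsets) such that A ∈ E implies A* ∈ E, and E is nested. Let VT be the set of functions α : E → {0,1} such that for every A ∈ E exactly one of α(A), α(A*) equals 1, and such that α(A) = 1 and A ⊆ B with B ∈ E imply α(B) = 1. Define a simple graph T on VT by joining α and β when α ≠ β and there is some A ∈ E with α(C) = β(C) for every C ∈ E other than A and A*. Then T is a tree, and for every pair {A, A*} with A ∈ E there is exactly one edge {α, β} of T such that α and β differ precisely on A and A*. -/

import Mathlib

open Classical

/-- Two subsets of `V` are nested if at least one of the four corners is empty. -/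
def Nested {V : Type*} (A B : Set V) : Prop :=
  A ∩ B = ∅ ∨ A ∩ Bᶜ = ∅ ∨ Aᶜ ∩ B = ∅ ∨ Aᶜ ∩ Bᶜ = ∅

/-- The vertices of the structure tree: subsets `α ⊆ E` (recording the cuts on which the
`{0,1}`-valued function takes the value `1`) such that for every `A ∈ E` exactly one of
`A`, `Aᶜ` is in `α`, and such that `A ∈ α`, `A ⊆ B`, `B ∈ E` imply `B ∈ α`. -/
def IsTreeVertex {V : Type*} (E : Set (Set V)) (α : Set (Set V)) : Prop :=
  α ⊆ E ∧ (∀ A ∈ E, (A ∈ α ↔ Aᶜ ∉ α)) ∧ (∀ A ∈ α, ∀ B ∈ E, A ⊆ B → B ∈ α)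

/-- The structure tree on the vertex set above: `α` and `β` are joined when they are
distinct and agree on every `C ∈ E` other than some `A` and `Aᶜ` with `A ∈ E`. -/
def structureTree {V : Type*} (E : Set (Set V)) :
    SimpleGraph {α : Set (Set V) // IsTreeVertex E α} where
  Adj α β := α ≠ β ∧ ∃ A ∈ E, ∀ C ∈ E, C ≠ A → C ≠ Aᶜ → (C ∈ α.val ↔ C ∈ β.val)
  symm := by
    constructor
    rintro α β ⟨hne, A, hA, h⟩
    exact ⟨hne.symm, A, hA, fun C hC h1 h2 => (h C hC h1 h2).symm⟩
  loopless := by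
    constructor
    rintro α ⟨hne, -⟩
    exact hne rfl

/-- `α` and `β` differ precisely on `A` and `Aᶜ`. -/
def DiffersExactlyOn {V : Type*} (E : Set (Set V))
    (α β : {α : Set (Set V) // IsTreeVertex E α}) (A : Set V) : Prop :=
  ¬ (A ∈ α.val ↔ A ∈ β.val) ∧ ¬ (Aᶜ ∈ α.val ↔ Aᶜ ∈ β.val) ∧
    ∀ C ∈ E, C ≠ A → C ≠ Aᶜ → (C ∈ α.val ↔ C ∈ β.val)

section Helpers
variable {V : Type*} {E : Set (Set V)} {A B : Set V} {α β : Set (Set V)}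

lemma st_compl_ne_self (h : A ≠ ∅) : A ≠ Aᶜ := by
  intro he
  apply h
  ext x
  simp only [Set.mem_empty_iff_false, iff_false]
  intro hx
  have := he ▸ hx
  exact this hx

lemma st_eq_empty_of_subset_compl (h : A ⊆ Aᶜ) : A = ∅ := by
  ext x
  simp only [Set.mem_empty_iff_false, iff_false]
  exact fun hx => h hx hx

lemma st_eq_univ_of_compl_subset (h : Aᶜ ⊆ A) : A = Set.univ := by
  have : Aᶜ = ∅ := st_eq_empty_of_subset_compl (by simpa using h)
  simpa [Set.compl_empty_iff] using this

lemma st_nested_cases (h : Nested A B) : A ⊆ B ∨ Aᶜ ⊆ B ∨ A ⊆ Bᶜ ∨ Aᶜ ⊆ Bᶜ := by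
  rcases h with h | h | h | h
  · refine Or.inr (Or.inr (Or.inl fun x hx => ?_))
    rw [Set.mem_compl_iff]
    exact fun hb => (Set.eq_empty_iff_forall_notMem.mp h x) ⟨hx, hb⟩
  · refine Or.inl fun x hx => ?_
    by_contra hb
    exact (Set.eq_empty_iff_forall_notMem.mp h x) ⟨hx, hb⟩
  · refine Or.inr (Or.inr (Or.inr fun x hx => ?_))
    rw [Set.mem_compl_iff]
    exact fun hb => (Set.eq_empty_iff_forall_notMem.mp h x) ⟨hx, hb⟩
  · refine Or.inr (Or.inl fun x hx => ?_)
    by_contra hb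
    exact (Set.eq_empty_iff_forall_notMem.mp h x) ⟨hx, hb⟩

lemma st_not_both (h0 : A ≠ ∅) (h1 : A ≠ Set.univ) (hBA : B ≠ A) (hBAc : B ≠ Aᶜ) :
    ¬((A ⊆ B ∨ Aᶜ ⊆ B) ∧ (A ⊆ Bᶜ ∨ Aᶜ ⊆ Bᶜ)) := by
  rintro ⟨h2 | h2, h3 | h3⟩
  · exact h0 (Set.eq_empty_iff_forall_notMem.mpr fun x hx => (h3 hx) (h2 hx))
  · exact hBA (subset_antisymm (Set.compl_subset_compl.mp h3) h2)
  · exact hBAc (subset_antisymm (Set.subset_compl_comm.mp h3) h2)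
  · exact h1 (by
      have : Aᶜ = ∅ := Set.eq_empty_iff_forall_notMem.mpr fun x hx => (h3 hx) (h2 hx)
      simpa [Set.compl_empty_iff] using this)

lemma st_mem_compl_of_not_mem (hα : IsTreeVertex E α) (hA : A ∈ E) (h : A ∉ α) : Aᶜ ∈ α := by
  by_contra hc
  exact h ((hα.2.1 A hA).mpr hc)

lemma st_not_mem_compl (hα : IsTreeVertex E α) (hA : A ∈ E) (h : A ∈ α) : Aᶜ ∉ α :=
  (hα.2.1 A hA).mp h

lemma st_vertex_eq_of_subset (hα : IsTreeVertex E α) (hβ : IsTreeVertex E β) (h : α ⊆ β) :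
    α = β := by
  ext B
  refine ⟨fun hB => h hB, fun hB => ?_⟩
  by_contra hB'
  have hE : B ∈ E := hβ.1 hB
  have : Bᶜ ∈ α := st_mem_compl_of_not_mem hα hE hB'
  exact st_not_mem_compl hβ hE hB (h this)

end Helpers

section Canon
variable {V : Type*} {E : Set (Set V)} {A B : Set V} {α β : Set (Set V)}

def canonSide (E : Set (Set V)) (A : Set V) : Set (Set V) :=
  {B | B ∈ E ∧ (A ⊆ B ∨ Aᶜ ⊆ B) ∧ B ≠ Aᶜ}

lemma st_mem_canon_self (hA : A ∈ E) (h0 : A ≠ ∅) : A ∈ canonSide E A :=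
  ⟨hA, Or.inl subset_rfl, st_compl_ne_self h0⟩

lemma st_compl_not_mem_canon : Aᶜ ∉ canonSide E A := fun h => h.2.2 rfl

lemma st_canon_compl_agree (hC1 : B ≠ A) (hC2 : B ≠ Aᶜ) :
    (B ∈ canonSide E A ↔ B ∈ canonSide E Aᶜ) := by
  simp only [canonSide, Set.mem_setOf_eq, compl_compl]
  constructor
  · rintro ⟨hE, h | h, -⟩
    · exact ⟨hE, Or.inr h, hC1⟩
    · exact ⟨hE, Or.inl h, hC1⟩
  · rintro ⟨hE, h | h, -⟩
    · exact ⟨hE, Or.inr h, hC2⟩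
    · exact ⟨hE, Or.inl h, hC2⟩

lemma st_canon_isTreeVertex (hcut : ∀ A ∈ E, A ≠ ∅ ∧ A ≠ Set.univ)
    (hcompl : ∀ A ∈ E, Aᶜ ∈ E)
    (hnested : ∀ A ∈ E, ∀ B ∈ E, Nested A B) (hA : A ∈ E) :
    IsTreeVertex E (canonSide E A) := by
  obtain ⟨h0, h1⟩ := hcut A hA
  refine ⟨fun B hB => hB.1, ?_, ?_⟩
  · intro B hB
    by_cases hBA : B = A
    · subst hBA
      simp only [st_mem_canon_self hA h0, true_iff]
      exact st_compl_not_mem_canon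
    by_cases hBAc : B = Aᶜ
    · subst hBAc
      simp only [st_compl_not_mem_canon, false_iff, not_not, compl_compl]
      exact st_mem_canon_self hA h0
    · have hBcA : Bᶜ ≠ A := fun h => hBAc (by rw [← h, compl_compl])
      have hBcAc : Bᶜ ≠ Aᶜ := fun h => hBA (by
        have := congrArg compl h
        simpa using this)
      constructor
      · rintro ⟨-, h2, -⟩ ⟨-, h3, -⟩
        exact st_not_both h0 h1 hBA hBAc ⟨h2, h3⟩
      · intro h
        have hcases := st_nested_cases (hnested A hA B hB)
        rcases hcases with hc | hc | hc | hc
        · exact ⟨hB, Or.inl hc, hBAc⟩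
        · exact ⟨hB, Or.inr hc, hBAc⟩
        · exact absurd ⟨hcompl B hB, Or.inl hc, hBcAc⟩ h
        · exact absurd ⟨hcompl B hB, Or.inr hc, hBcAc⟩ h
  · rintro B ⟨-, hB2, hB3⟩ C hC hBC
    refine ⟨hC, ?_, ?_⟩
    · rcases hB2 with h | h
      · exact Or.inl (h.trans hBC)
      · exact Or.inr (h.trans hBC)
    · intro hCAc
      subst hCAc
      rcases hB2 with h | h
      · exact h0 (st_eq_empty_of_subset_compl (h.trans hBC))
      · exact hB3 (subset_antisymm hBC h)

lemma st_eq_canon (hcut : ∀ A ∈ E, A ≠ ∅ ∧ A ≠ Set.univ)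
    (hcompl : ∀ A ∈ E, Aᶜ ∈ E)
    (hnested : ∀ A ∈ E, ∀ B ∈ E, Nested A B) (hA : A ∈ E)
    (hα : IsTreeVertex E α) (hβ : IsTreeVertex E β)
    (hAα : A ∈ α) (hAβ : Aᶜ ∈ β)
    (hagree : ∀ C ∈ E, C ≠ A → C ≠ Aᶜ → (C ∈ α ↔ C ∈ β)) :
    α = canonSide E A := by
  obtain ⟨h0, h1⟩ := hcut A hA
  have hAcE : Aᶜ ∈ E := hcompl A hA
  have hAβ' : A ∉ β := by
    intro h
    exact st_not_mem_compl hβ hA h hAβ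
  ext B
  constructor
  · intro hB
    have hBE : B ∈ E := hα.1 hB
    by_cases hBA : B = A
    · subst hBA; exact st_mem_canon_self hA h0
    by_cases hBAc : B = Aᶜ
    · subst hBAc
      exact absurd hB (st_not_mem_compl hα hA hAα)
    refine ⟨hBE, ?_, hBAc⟩
    by_contra hcon
    push_neg at hcon
    rcases st_nested_cases (hnested A hA B hBE) with hc | hc | hc | hc
    · exact hcon.1 hc
    · exact hcon.2 hc
    · -- A ⊆ Bᶜ, so B ⊆ Aᶜ, so Aᶜ ∈ α : contradiction
      have : B ⊆ Aᶜ := Set.subset_compl_comm.mp hc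
      exact st_not_mem_compl hα hA hAα (hα.2.2 B hB Aᶜ hAcE this)
    · -- Aᶜ ⊆ Bᶜ, so B ⊆ A, B ∈ β, so A ∈ β : contradiction
      have hBsubA : B ⊆ A := Set.compl_subset_compl.mp hc
      have hBβ : B ∈ β := (hagree B hBE hBA hBAc).mp hB
      exact hAβ' (hβ.2.2 B hBβ A hA hBsubA)
  · rintro ⟨hBE, hB2, hBAc⟩
    rcases hB2 with h | h
    · exact hα.2.2 A hAα B hBE h
    · have hBβ : B ∈ β := hβ.2.2 Aᶜ hAβ B hBE h
      have hBA : B ≠ A := by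
        rintro rfl
        exact hAβ' hBβ
      exact (hagree B hBE hBA hBAc).mpr hBβ

end Canon

section Flip
variable {V : Type*} {E : Set (Set V)} {A : Set V} {α β : Set (Set V)}

lemma st_self_not_mem_canon_compl : A ∉ canonSide E Aᶜ := fun h => h.2.2 (compl_compl A).symm

lemma st_flip (hcut : ∀ A ∈ E, A ≠ ∅ ∧ A ≠ Set.univ) (hcompl : ∀ A ∈ E, Aᶜ ∈ E)
    (hα : IsTreeVertex E α) (hβ : IsTreeVertex E β)
    (hAα : A ∈ α) (hAβ : A ∉ β)
    (hmin : ∀ B ∈ α, B ∉ β → B ⊆ A → B = A) :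
    IsTreeVertex E (insert Aᶜ (α \ {A})) ∧
      (insert Aᶜ (α \ {A})) \ β = (α \ β) \ {A} ∧
      (∀ C ∈ E, C ≠ A → C ≠ Aᶜ → (C ∈ α ↔ C ∈ insert Aᶜ (α \ {A}))) := by
  have hAE : A ∈ E := hα.1 hAα
  have hAcE : Aᶜ ∈ E := hcompl A hAE
  obtain ⟨h0, h1⟩ := hcut A hAE
  have hAne : A ≠ Aᶜ := st_compl_ne_self h0
  have hAcα : Aᶜ ∉ α := st_not_mem_compl hα hAE hAα
  have hAcβ : Aᶜ ∈ β := st_mem_compl_of_not_mem hβ hAE hAβ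
  have hmem : ∀ B, B ∈ insert Aᶜ (α \ {A}) ↔ B = Aᶜ ∨ (B ∈ α ∧ B ≠ A) := by
    intro B
    simp [Set.mem_insert_iff, Set.mem_diff]
  refine ⟨⟨?_, ?_, ?_⟩, ?_, ?_⟩
  · rintro B hB
    rcases (hmem B).mp hB with rfl | ⟨hB', -⟩
    · exact hAcE
    · exact hα.1 hB'
  · intro B hBE
    by_cases hBA : B = A
    · subst hBA
      rw [hmem, hmem]
      exact iff_of_false (by rintro (h | ⟨-, h⟩); exacts [hAne h, h rfl])
        (fun h => h (Or.inl rfl))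
    by_cases hBAc : B = Aᶜ
    · subst hBAc
      rw [hmem, hmem, compl_compl]
      exact iff_of_true (Or.inl rfl)
        (by rintro (h | ⟨-, h⟩); exacts [hAne h, h rfl])
    · have hBcA : Bᶜ ≠ A := fun h => hBAc (by rw [← h, compl_compl])
      have hBcAc : Bᶜ ≠ Aᶜ := fun h => hBA (by
        have := congrArg compl h
        simpa using this)
      rw [hmem, hmem]
      simp only [hBAc, hBcAc, false_or, ne_eq, hBA, hBcA, not_false_iff, and_true]
      exact hα.2.1 B hBE
  · intro C hC B hBE hCB
    rw [hmem] at hC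
    rw [hmem]
    rcases hC with rfl | ⟨hCα, hCA⟩
    · -- C = Aᶜ
      by_cases hB : B = Aᶜ
      · exact Or.inl hB
      right
      have hBA' : B ≠ A := by
        rintro rfl
        exact h1 (st_eq_univ_of_compl_subset hCB)
      refine ⟨?_, hBA'⟩
      by_contra hBα
      have hBcα : Bᶜ ∈ α := st_mem_compl_of_not_mem hα hBE hBα
      have hBcβ : Bᶜ ∉ β := by
        have hBβ : B ∈ β := hβ.2.2 Aᶜ hAcβ B hBE hCB
        exact st_not_mem_compl hβ hBE hBβ
      have hBcsubA : Bᶜ ⊆ A := by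
        have := Set.compl_subset_compl.mpr hCB
        simpa using this
      have hBcA : Bᶜ = A := hmin Bᶜ hBcα hBcβ hBcsubA
      exact hB (by rw [← compl_compl B, hBcA])
    · -- C ∈ α, C ≠ A
      have hBα : B ∈ α := hα.2.2 C hCα B hBE hCB
      right
      refine ⟨hBα, ?_⟩
      rintro rfl
      by_cases hCβ : C ∈ β
      · exact hAβ (hβ.2.2 C hCβ B hBE hCB)
      · exact hCA (hmin C hCα hCβ hCB)
  · ext B
    simp only [Set.mem_diff, hmem, Set.mem_singleton_iff]
    constructor
    · rintro ⟨rfl | ⟨h1', h2'⟩, hBβ⟩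
      · exact absurd hAcβ hBβ
      · exact ⟨⟨h1', hBβ⟩, h2'⟩
    · rintro ⟨⟨h1', h2'⟩, h3'⟩
      exact ⟨Or.inr ⟨h1', h3'⟩, h2'⟩
  · intro C hC h1' h2'
    rw [hmem]
    constructor
    · exact fun h => Or.inr ⟨h, h1'⟩
    · rintro (rfl | ⟨h, -⟩)
      · exact absurd rfl h2'
      · exact h

end Flip

/-- If `E` is a finite nested set of cuts closed under complementation, then the
structure tree is a tree, and for each `A ∈ E` there is exactly one edge whose two
vertices differ precisely on `A` and `Aᶜ`. -/
theorem structureTree_isTree {V : Type*} (E : Set (Set V)) (hfin : E.Finite)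
    (hcut : ∀ A ∈ E, A ≠ ∅ ∧ A ≠ Set.univ)
    (hcompl : ∀ A ∈ E, Aᶜ ∈ E)
    (hnested : ∀ A ∈ E, ∀ B ∈ E, Nested A B) :
    (structureTree E).IsTree ∧
      ∀ A ∈ E, ∃! e : Sym2 {α : Set (Set V) // IsTreeVertex E α},
        e ∈ (structureTree E).edgeSet ∧
          ∃ α β, e = s(α, β) ∧ DiffersExactlyOn E α β A := by
  classical
  set G := structureTree E with hG
  -- determination lemma
  have det2 : ∀ A ∈ E, ∀ γ δ : {α : Set (Set V) // IsTreeVertex E α},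
      DiffersExactlyOn E γ δ A → A ∈ γ.val →
      γ.val = canonSide E A ∧ δ.val = canonSide E Aᶜ := by
    intro A hA γ δ ⟨d1, d2, d3⟩ hAγ
    have hAδ : A ∉ δ.val := fun h => d1 (iff_of_true hAγ h)
    have hAcδ : Aᶜ ∈ δ.val := st_mem_compl_of_not_mem δ.2 hA hAδ
    have hAcγ : Aᶜ ∉ γ.val := st_not_mem_compl γ.2 hA hAγ
    constructor
    · exact st_eq_canon hcut hcompl hnested hA γ.2 δ.2 hAγ hAcδ d3
    · refine st_eq_canon hcut hcompl hnested (hcompl A hA) δ.2 γ.2 hAcδ ?_ ?_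
      · rw [compl_compl]; exact hAγ
      · intro C hC h1' h2'
        rw [compl_compl] at h2'
        exact (d3 C hC h2' h1').symm
  -- every adjacency gives a DiffersExactlyOn with witness in the first vertex
  have adj_diff : ∀ γ δ : {α : Set (Set V) // IsTreeVertex E α}, G.Adj γ δ →
      ∃ A ∈ E, A ∈ γ.val ∧ DiffersExactlyOn E γ δ A := by
    rintro γ δ ⟨hne, B, hB, hag⟩
    have hvals : γ.val ≠ δ.val := fun h => hne (Subtype.ext h)
    have hex : ∃ C, ¬(C ∈ γ.val ↔ C ∈ δ.val) := by
      by_contra h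
      push_neg at h
      exact hvals (Set.ext fun C => h C)
    obtain ⟨C, hC⟩ := hex
    have hCE : C ∈ E := by
      by_cases h1 : C ∈ γ.val
      · exact γ.2.1 h1
      by_cases h2 : C ∈ δ.val
      · exact δ.2.1 h2
      exact absurd (iff_of_false h1 h2) hC
    have hCBB : C = B ∨ C = Bᶜ := by
      by_contra h
      push_neg at h
      exact hC (hag C hCE h.1 h.2)
    have key : (B ∈ γ.val ↔ B ∈ δ.val) ↔ (Bᶜ ∈ γ.val ↔ Bᶜ ∈ δ.val) := by
      have e1 := γ.2.2.1 B hB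
      have e2 := δ.2.2.1 B hB
      constructor <;> intro h <;> tauto
    have hdB : ¬(B ∈ γ.val ↔ B ∈ δ.val) := by
      rcases hCBB with rfl | rfl
      · exact hC
      · exact fun h => hC (key.mp h)
    have hdBc : ¬(Bᶜ ∈ γ.val ↔ Bᶜ ∈ δ.val) := by
      rcases hCBB with rfl | rfl
      · exact fun h => hC (key.mpr h)
      · exact hC
    by_cases hBγ : B ∈ γ.val
    · exact ⟨B, hB, hBγ, hdB, hdBc, hag⟩
    · have hBcγ : Bᶜ ∈ γ.val := st_mem_compl_of_not_mem γ.2 hB hBγ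
      refine ⟨Bᶜ, hcompl B hB, hBcγ, hdBc, by rwa [compl_compl], ?_⟩
      intro C' hC' h1' h2'
      rw [compl_compl] at h2'
      exact hag C' hC' h2' h1'
  -- crossing edges are determined
  have cross : ∀ A ∈ E, ∀ γ δ : {α : Set (Set V) // IsTreeVertex E α}, G.Adj γ δ →
      ¬(A ∈ γ.val ↔ A ∈ δ.val) →
      (γ.val = canonSide E A ∧ δ.val = canonSide E Aᶜ) ∨
        (γ.val = canonSide E Aᶜ ∧ δ.val = canonSide E A) := by
    intro A hA γ δ hadj hne
    obtain ⟨B, hB, hBγ, hd⟩ := adj_diff γ δ hadj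
    by_cases hAB : A = B
    · subst hAB
      exact Or.inl (det2 A hB γ δ hd hBγ)
    by_cases hABc : A = Bᶜ
    · have hBAc : B = Aᶜ := by rw [hABc, compl_compl]
      obtain ⟨hγ, hδ⟩ := det2 B hB γ δ hd hBγ
      refine Or.inr ⟨?_, ?_⟩
      · rwa [hBAc] at hγ
      · rw [hBAc] at hδ
        rwa [compl_compl] at hδ
    · exact absurd (hd.2.2 A hA (Ne.symm (fun h => hAB h.symm)) hABc) hne
  -- Preconnectedness by flipping a minimal difference
  have pre : G.Preconnected := by
    have key : ∀ n : ℕ, ∀ γ δ : {α : Set (Set V) // IsTreeVertex E α},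
        (γ.val \ δ.val).ncard ≤ n → G.Reachable γ δ := by
      intro n
      induction n with
      | zero =>
        intro γ δ h
        have hfd : (γ.val \ δ.val).Finite := hfin.subset (fun x hx => γ.2.1 hx.1)
        have hempty : γ.val \ δ.val = ∅ := (Set.ncard_eq_zero hfd).mp (Nat.le_zero.mp h)
        have heq : γ = δ := Subtype.ext
          (st_vertex_eq_of_subset γ.2 δ.2 (Set.diff_eq_empty.mp hempty))
        rw [heq]
      | succ n ih =>
        intro γ δ h
        have hfd : (γ.val \ δ.val).Finite := hfin.subset (fun x hx => γ.2.1 hx.1)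
        by_cases hfd0 : γ.val \ δ.val = ∅
        · have heq : γ = δ := Subtype.ext
            (st_vertex_eq_of_subset γ.2 δ.2 (Set.diff_eq_empty.mp hfd0))
          rw [heq]
        obtain ⟨A, hAmem, hminw⟩ := Set.Finite.exists_minimalFor id _ hfd
          (Set.nonempty_iff_ne_empty.mpr hfd0)
        have hmin : ∀ B ∈ γ.val, B ∉ δ.val → B ⊆ A → B = A := fun B hB1 hB2 hsub =>
          subset_antisymm hsub (hminw ⟨hB1, hB2⟩ hsub)
        obtain ⟨hvert, hdiffeq, hagree⟩ :=
          st_flip hcut hcompl γ.2 δ.2 hAmem.1 hAmem.2 hmin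
        have hAE : A ∈ E := γ.2.1 hAmem.1
        have hAne : A ≠ Aᶜ := st_compl_ne_self (hcut A hAE).1
        set γ' : {α : Set (Set V) // IsTreeVertex E α} := ⟨insert Aᶜ (γ.val \ {A}), hvert⟩
          with hγ'
        have hAnot : A ∉ γ'.val := by
          rintro (h | ⟨-, h⟩)
          · exact hAne h
          · exact h rfl
        have hadj : G.Adj γ γ' := by
          refine ⟨fun h => hAnot (h ▸ hAmem.1), A, hAE, hagree⟩
        have hcard : (γ'.val \ δ.val).ncard ≤ n := by
          have : γ'.val \ δ.val = (γ.val \ δ.val) \ {A} := hdiffeq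
          rw [this]
          have hlt := Set.ncard_diff_singleton_lt_of_mem hAmem hfd
          omega
        exact (hadj.reachable).trans (ih γ' δ hcard)
    intro γ δ
    exact key _ γ δ le_rfl
  -- Acyclicity via bridges
  have acyc : G.IsAcyclic := by
    rw [SimpleGraph.isAcyclic_iff_forall_adj_isBridge]
    intro γ δ hadj
    obtain ⟨A, hA, hAγ, hd⟩ := adj_diff γ δ hadj
    obtain ⟨hγv, hδv⟩ := det2 A hA γ δ hd hAγ
    rw [SimpleGraph.isBridge_iff]
    rintro ⟨p⟩
    have inv : ∀ {x y : {α : Set (Set V) // IsTreeVertex E α}},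
        (G \ SimpleGraph.fromEdgeSet {s(γ, δ)}).Walk x y → (A ∈ x.val ↔ A ∈ y.val) := by
      intro x y p
      induction p with
      | nil => exact Iff.rfl
      | @cons x z y h q ih =>
        refine Iff.trans ?_ ih
        rw [SimpleGraph.sdiff_adj] at h
        by_contra hne
        have hxz : x ≠ z := fun he => hne (by rw [he])
        rcases cross A hA x z h.1 hne with ⟨hx, hz⟩ | ⟨hx, hz⟩
        · have hxγ : x = γ := Subtype.ext (hx.trans hγv.symm)
          have hzδ : z = δ := Subtype.ext (hz.trans hδv.symm)
          exact h.2 ((SimpleGraph.fromEdgeSet_adj _).mpr ⟨by rw [hxγ, hzδ]; rfl, hxz⟩)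
        · have hxδ : x = δ := Subtype.ext (hx.trans hδv.symm)
          have hzγ : z = γ := Subtype.ext (hz.trans hγv.symm)
          refine h.2 ((SimpleGraph.fromEdgeSet_adj _).mpr ⟨?_, hxz⟩)
          rw [hxδ, hzγ, Sym2.eq_swap]
          rfl
    exact hd.1 (inv p)
  -- Nonemptiness
  have hne : Nonempty {α : Set (Set V) // IsTreeVertex E α} := by
    rcases Set.eq_empty_or_nonempty E with rfl | ⟨A, hA⟩
    · exact ⟨⟨∅, Set.Subset.rfl, fun A hA => absurd hA (Set.notMem_empty A),
        fun A hA => absurd hA (Set.notMem_empty A)⟩⟩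
    · exact ⟨⟨canonSide E A, st_canon_isTreeVertex hcut hcompl hnested hA⟩⟩
  refine ⟨⟨(SimpleGraph.connected_iff G).mpr ⟨pre, hne⟩, acyc⟩, ?_⟩
  -- uniqueness of the edge for each pair
  intro A hA
  obtain ⟨h0, h1⟩ := hcut A hA
  have hAcE : Aᶜ ∈ E := hcompl A hA
  have hc0 : Aᶜ ≠ ∅ := fun h => h1 (by simpa [Set.compl_empty_iff] using h)
  set vA : {α : Set (Set V) // IsTreeVertex E α} :=
    ⟨canonSide E A, st_canon_isTreeVertex hcut hcompl hnested hA⟩ with hvA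
  set wA : {α : Set (Set V) // IsTreeVertex E α} :=
    ⟨canonSide E Aᶜ, st_canon_isTreeVertex hcut hcompl hnested hAcE⟩ with hwA
  have hAv : A ∈ vA.val := st_mem_canon_self hA h0
  have hAw : A ∉ wA.val := st_self_not_mem_canon_compl
  have hAcv : Aᶜ ∉ vA.val := st_compl_not_mem_canon
  have hAcw : Aᶜ ∈ wA.val := st_mem_canon_self hAcE hc0
  have hdvw : DiffersExactlyOn E vA wA A :=
    ⟨fun h => hAw (h.mp hAv), fun h => hAcv (h.mpr hAcw),
      fun C hC h1' h2' => st_canon_compl_agree h1' h2'⟩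
  have hadj : G.Adj vA wA :=
    ⟨fun h => hAw (h ▸ hAv), A, hA, fun C hC h1' h2' => st_canon_compl_agree h1' h2'⟩
  refine ⟨s(vA, wA), ⟨hadj, vA, wA, rfl, hdvw⟩, ?_⟩
  rintro e ⟨hedge, γ, δ, rfl, hd⟩
  by_cases hAγ : A ∈ γ.val
  · obtain ⟨hγ, hδ⟩ := det2 A hA γ δ hd hAγ
    have e1 : γ = vA := Subtype.ext hγ
    have e2 : δ = wA := Subtype.ext hδ
    rw [e1, e2]
  · have hAδ : A ∈ δ.val := by
      by_contra h
      exact hd.1 (iff_of_false hAγ h)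
    have hd' : DiffersExactlyOn E δ γ A :=
      ⟨fun h => hd.1 h.symm, fun h => hd.2.1 h.symm, fun C hC a b => (hd.2.2 C hC a b).symm⟩
    obtain ⟨hδ, hγ⟩ := det2 A hA δ γ hd' hAδ
    have e1 : γ = wA := Subtype.ext hγ
    have e2 : δ = vA := Subtype.ext hδ
    rw [e1, e2, Sym2.eq_swap]
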